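/- arXiv:2106.10370 — 4 statements merged into one kernel-verified Lean document; each statement's English description precedes it below -/
import Mathlib

section
/- Let F be a finite set of probability distributions on a countable space Z, and let π: F → W be a property mapping into a normed space. Suppose there exists an estimator π̂: Z → W such that for every f ∈ F and z ~ f, Pr(‖π(f) − π̂(z)‖ ≥ ε) ≤ δ. Define the MLE map f_z = argmax_{g ∈ F} g(z). Then for every f ∈ F, Pr_{z~f}(‖π(f) − π(f_z)‖ ≥ 2ε) ≤ (|F| + 1)·δ. -/
open scoped ENNReal

/-- Competitiveness of MLE over a finite family of distributions:
if some estimator `est` estimates a property `π` to accuracy `ε` with failure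
probability `δ` for every `f ∈ F`, then the MLE plug-in estimator achieves
accuracy `2ε` with failure probability `(|F| + 1)·δ`. -/
theorem mle_competitive_finite
    {Z : Type*} [Countable Z] {W : Type*} [NormedAddCommGroup W]
    (F : Finset (PMF Z)) (π : PMF Z → W) (est : Z → W)
    (mle : Z → PMF Z)
    (hmle : ∀ z : Z, mle z ∈ F ∧ ∀ g ∈ F, g z ≤ (mle z) z)
    (ε : ℝ) (δ : ℝ≥0∞)
    (hest : ∀ f ∈ F, (∑' z : Z, if ε ≤ ‖π f - est z‖ then f z else 0) ≤ δ) :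
    ∀ f ∈ F,
      (∑' z : Z, if 2 * ε ≤ ‖π f - π (mle z)‖ then f z else 0)
        ≤ ((F.card : ℝ≥0∞) + 1) * δ := by
  intro f hf
  have key : ∀ z : Z,
      (if 2 * ε ≤ ‖π f - π (mle z)‖ then f z else 0)
        ≤ (if ε ≤ ‖π f - est z‖ then f z else 0)
          + ∑ g ∈ F, (if ε ≤ ‖π g - est z‖ then g z else 0) := by
    intro z
    by_cases h : 2 * ε ≤ ‖π f - π (mle z)‖
    · rw [if_pos h]
      obtain ⟨hmem, hmax⟩ := hmle z
      have htri : ‖π f - π (mle z)‖ ≤ ‖π f - est z‖ + ‖π (mle z) - est z‖ := by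
        have h1 := norm_sub_le (π f - est z) (π (mle z) - est z)
        simpa [sub_sub_sub_cancel_right] using h1
      rcases le_or_gt ε ‖π f - est z‖ with h1 | h1
      · rw [if_pos h1]
        exact le_add_right le_rfl
      · have h2 : ε ≤ ‖π (mle z) - est z‖ := by linarith
        calc f z ≤ (mle z) z := hmax f hf
          _ = (if ε ≤ ‖π (mle z) - est z‖ then (mle z) z else 0) := by simp [h2]
          _ ≤ ∑ g ∈ F, (if ε ≤ ‖π g - est z‖ then g z else 0) :=
              Finset.single_le_sum (f := fun g => if ε ≤ ‖π g - est z‖ then g z else 0)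
                (fun g _ => zero_le) hmem
          _ ≤ _ := le_add_self
    · rw [if_neg h]
      exact zero_le
  calc (∑' z : Z, if 2 * ε ≤ ‖π f - π (mle z)‖ then f z else 0)
      ≤ ∑' z : Z, ((if ε ≤ ‖π f - est z‖ then f z else 0)
          + ∑ g ∈ F, (if ε ≤ ‖π g - est z‖ then g z else 0)) :=
        ENNReal.tsum_le_tsum key
    _ = (∑' z : Z, if ε ≤ ‖π f - est z‖ then f z else 0)
          + ∑' z : Z, ∑ g ∈ F, (if ε ≤ ‖π g - est z‖ then g z else 0) :=
        ENNReal.tsum_add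
    _ = (∑' z : Z, if ε ≤ ‖π f - est z‖ then f z else 0)
          + ∑ g ∈ F, ∑' z : Z, (if ε ≤ ‖π g - est z‖ then g z else 0) := by
        rw [Summable.tsum_finsetSum (fun g _ => ENNReal.summable)]
    _ ≤ δ + ∑ g ∈ F, δ := by
        exact add_le_add (hest f hf) (Finset.sum_le_sum fun g hg => hest g hg)
    _ = δ + (F.card : ℝ≥0∞) * δ := by
        rw [Finset.sum_const, nsmul_eq_mul]
    _ = ((F.card : ℝ≥0∞) + 1) * δ := by ring
end

section
/- For the fixed-design Poisson regression family with p(y|x_i;θ) = Poisson(⟨θ,x_i⟩), suppose ‖θ‖₂ ≤ w, ⟨θ,x_i⟩ ≥ γ > 0 and ⟨θ',x_i⟩ ≥ γ for all i, and ‖x_i‖₂ ≤ R. Then the L1 distance between the product distributions over n samples satisfies ‖f(·;θ) − f(·;θ')‖₁ ≤ R√(2nw‖θ−θ'‖₂/γ). -/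
open Real
set_option maxHeartbeats 1000000


lemma log_ge_one_sub_inv {t : ℝ} (ht : 0 < t) : 1 - 1/t ≤ Real.log t := by
  have h := Real.log_le_sub_one_of_pos (inv_pos.mpr ht)
  rw [Real.log_inv] at h
  rw [one_div]
  linarith

lemma k_hasDeriv {t : ℝ} (ht : 0 < t) :
    HasDerivAt (fun s : ℝ => (s+1)*Real.log s - 2*(s-1)) (Real.log t + 1/t - 1) t := by
  have h1 : HasDerivAt (fun s : ℝ => s+1) 1 t := (hasDerivAt_id t).add_const 1
  have h2 : HasDerivAt Real.log t⁻¹ t := Real.hasDerivAt_log (ne_of_gt ht)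
  have h4 : HasDerivAt (fun s : ℝ => 2*(s-1)) 2 t :=
by simpa using ((hasDerivAt_id t).sub_const 1).const_mul 2
  refine ((h1.mul h2).sub h4).congr_deriv ?_
  field_simp
  ring

lemma k_nonneg {t : ℝ} (ht : 1 ≤ t) : 2*(t-1) ≤ (t+1)*Real.log t := by
  have hmono : MonotoneOn (fun s : ℝ => (s+1)*Real.log s - 2*(s-1)) (Set.Ici 1) := by
    apply monotoneOn_of_deriv_nonneg (convex_Ici 1)
    · intro s hs
      exact (k_hasDeriv (lt_of_lt_of_le one_pos hs)).continuousAt.continuousWithinAt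
    · intro s hs
      rw [interior_Ici] at hs
      exact (k_hasDeriv (lt_trans one_pos hs)).differentiableAt.differentiableWithinAt
    · intro s hs
      rw [interior_Ici] at hs
      have hs0 : (0:ℝ) < s := lt_trans one_pos hs
      rw [(k_hasDeriv hs0).deriv]
      have := log_ge_one_sub_inv hs0
      linarith
  have h := hmono (Set.self_mem_Ici) (Set.mem_Ici.mpr ht) ht
  simp at h
  linarith

lemma k_nonpos {t : ℝ} (ht0 : 0 < t) (ht : t ≤ 1) : (t+1)*Real.log t ≤ 2*(t-1) := by
  have hmono : MonotoneOn (fun s : ℝ => (s+1)*Real.log s - 2*(s-1)) (Set.Ioc 0 1) := by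
    apply monotoneOn_of_deriv_nonneg (convex_Ioc 0 1)
    · intro s hs
      exact (k_hasDeriv hs.1).continuousAt.continuousWithinAt
    · intro s hs
      rw [interior_Ioc] at hs
      exact (k_hasDeriv hs.1).differentiableAt.differentiableWithinAt
    · intro s hs
      rw [interior_Ioc] at hs
      rw [(k_hasDeriv hs.1).deriv]
      have := log_ge_one_sub_inv hs.1
      linarith
  have h := hmono (Set.mem_Ioc.mpr ⟨ht0, ht⟩) (Set.mem_Ioc.mpr ⟨one_pos, le_refl 1⟩) ht
  simp at h
  linarith



lemma g_hasDeriv {t : ℝ} (ht : 0 < t) :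
    HasDerivAt (fun s : ℝ => 2*(s+2)*(s*Real.log s - s + 1) - 3*(s-1)^2)
      (4*((t+1)*Real.log t - 2*(t-1))) t := by
  have h1 : HasDerivAt (fun s : ℝ => 2*(s+2)) 2 t := by
    simpa using ((hasDerivAt_id t).add_const 2).const_mul 2
  have h2 : HasDerivAt (fun s : ℝ => s*Real.log s - s + 1) (Real.log t + 1 - 1) t :=
    ((Real.hasDerivAt_mul_log (ne_of_gt ht)).sub (hasDerivAt_id t)).add_const 1
  have h3 : HasDerivAt (fun s : ℝ => 3*(s-1)^2) (3*(2*(t-1))) t := by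
    simpa using (((hasDerivAt_id t).sub_const 1).pow 2).const_mul 3
  refine ((h1.mul h2).sub h3).congr_deriv ?_
  ring

lemma g_nonneg {t : ℝ} (ht : 0 < t) :
    3*(t-1)^2 ≤ 2*(t+2)*(t*Real.log t - t + 1) := by
  set g : ℝ → ℝ := fun s => 2*(s+2)*(s*Real.log s - s + 1) - 3*(s-1)^2 with hg
  have hg1 : g 1 = 0 := by simp [hg]
  have key : 0 ≤ g t := by
    rcases le_total 1 t with h | h
    · have hmono : MonotoneOn g (Set.Ici 1) := by
        apply monotoneOn_of_deriv_nonneg (convex_Ici 1)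
        · intro s hs
          exact (g_hasDeriv (lt_of_lt_of_le one_pos hs)).continuousAt.continuousWithinAt
        · intro s hs
          rw [interior_Ici] at hs
          exact (g_hasDeriv (lt_trans one_pos hs)).differentiableAt.differentiableWithinAt
        · intro s hs
          rw [interior_Ici] at hs
          rw [(g_hasDeriv (lt_trans one_pos hs)).deriv]
          have := k_nonneg hs.le
          linarith
      have := hmono Set.self_mem_Ici (Set.mem_Ici.mpr h) h
      rw [hg1] at this; exact this
    · have hanti : AntitoneOn g (Set.Ioc 0 1) := by
        apply antitoneOn_of_deriv_nonpos (convex_Ioc 0 1)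
        · intro s hs
          exact (g_hasDeriv hs.1).continuousAt.continuousWithinAt
        · intro s hs
          rw [interior_Ioc] at hs
          exact (g_hasDeriv hs.1).differentiableAt.differentiableWithinAt
        · intro s hs
          rw [interior_Ioc] at hs
          rw [(g_hasDeriv hs.1).deriv]
          have := k_nonpos hs.1 hs.2.le
          linarith
      have := hanti (Set.mem_Ioc.mpr ⟨ht, h⟩) (Set.mem_Ioc.mpr ⟨one_pos, le_refl 1⟩) h
      rw [hg1] at this; exact this
  simp only [hg] at key
  linarith

lemma pinsker_pointwise {p q : ℝ} (hp : 0 < p) (hq : 0 < q) :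
    3*(p-q)^2 ≤ 2*(p+2*q)*(p*Real.log (p/q) - p + q) := by
  have ht : 0 < p/q := div_pos hp hq
  have h := g_nonneg ht
  have h2 := mul_le_mul_of_nonneg_left h (sq_nonneg q)
  have e1 : q^2*(3*(p/q-1)^2) = 3*(p-q)^2 := by
    field_simp
  have e2 : q^2*(2*(p/q+2)*((p/q)*Real.log (p/q) - p/q + 1))
      = 2*(p+2*q)*(p*Real.log (p/q) - p + q) := by
    field_simp
  rw [e1, e2] at h2
  exact h2

noncomputable def poi (c : ℝ) (k : ℕ) : ℝ := Real.exp (-c) * c ^ k / (Nat.factorial k)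



lemma poi_pos {c : ℝ} (hc : 0 < c) (k : ℕ) : 0 < poi c k := by
  unfold poi; positivity

lemma hasSum_poi (c : ℝ) : HasSum (poi c) 1 := by
  unfold poi
  apply (hasSum_mul_left_iff (Real.exp_ne_zero c)).mp
  have : (fun i ↦ rexp c * (rexp (-c) * c ^ i / ↑(Nat.factorial i))) =
      fun i ↦ c ^ i / ↑(Nat.factorial i) := by
    ext n
    rw [mul_div_assoc, Real.exp_neg, ← mul_assoc, ← div_eq_mul_inv,
      div_self (Real.exp_ne_zero c), one_mul]
  rw [this, mul_one, Real.exp_eq_exp_ℝ]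
  exact NormedSpace.expSeries_div_hasSum_exp c

lemma hasSum_poi_mul (c : ℝ) : HasSum (fun k : ℕ => (k : ℝ) * poi c k) c := by
  have key : ∀ k : ℕ, ((k:ℝ)+1) * poi c (k+1) = c * poi c k := by
    intro k
    unfold poi
    have h1 : ((Nat.factorial (k+1) : ℕ) : ℝ) = ((k:ℝ)+1) * (Nat.factorial k) := by
      rw [Nat.factorial_succ]; push_cast; ring
    have h2 : ((Nat.factorial k : ℕ) : ℝ) ≠ 0 := Nat.cast_ne_zero.mpr (Nat.factorial_ne_zero k)
    have h3 : ((k:ℝ)+1) ≠ 0 := by positivity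
    rw [h1]
    field_simp
    ring
  apply (hasSum_nat_add_iff' (f := fun k : ℕ => (k : ℝ) * poi c k) 1).mp
  have h1 : HasSum (fun k : ℕ => ((k:ℝ)+1) * poi c (k+1)) c := by
    simp only [key]
    simpa using (hasSum_poi c).mul_left c
  simp only [Finset.range_one, Finset.sum_singleton, Nat.cast_zero, zero_mul, sub_zero]
  convert h1 using 2 with k
  · rfl
  push_cast
  ring_nf

lemma pi_hasSum : ∀ (n : ℕ) (f : Fin n → ℕ → ℝ) (s : Fin n → ℝ),
    (∀ i k, 0 ≤ f i k) → (∀ i, HasSum (f i) (s i)) →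
    HasSum (fun y : Fin n → ℕ => ∏ i, f i (y i)) (∏ i, s i) := by
  intro n
  induction n with
  | zero =>
      intro f s h0 h
      have e1 : ∀ y : Fin 0 → ℕ, (∏ i, f i (y i)) = 1 := by intro y; simp
      simp only [e1]
      have : (∏ i : Fin 0, s i) = 1 := by simp
      rw [this]
      exact hasSum_single (f := fun _ : Fin 0 → ℕ => (1:ℝ)) (fun _ => 0)
        (fun y hy => absurd (Subsingleton.elim y _) hy)
  | succ m ih =>
      intro f s h0 h
      set F : (Fin m → ℕ) → ℝ := fun z => ∏ i : Fin m, f i.succ (z i) with hF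
      have ihm : HasSum F (∏ i : Fin m, s i.succ) :=
        ih (fun i => f i.succ) (fun i => s i.succ)
          (fun i k => h0 i.succ k) (fun i => h i.succ)
      have hFnn : ∀ z, 0 ≤ F z := fun z => Finset.prod_nonneg (fun i _ => h0 i.succ (z i))
      have hs : Summable fun p : ℕ × (Fin m → ℕ) => f 0 p.1 * F p.2 :=
        Summable.mul_of_nonneg (h 0).summable ihm.summable (fun k => h0 0 k) hFnn
      have hmul : HasSum (fun p : ℕ × (Fin m → ℕ) => f 0 p.1 * F p.2)
          (s 0 * ∏ i : Fin m, s i.succ) := (h 0).mul ihm hs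
      have heq : (fun y : Fin (m+1) → ℕ => ∏ i, f i (y i)) ∘
          (Fin.consEquiv (fun _ : Fin (m+1) => ℕ)) =
          fun p : ℕ × (Fin m → ℕ) => f 0 p.1 * F p.2 := by
        funext p
        simp [hF, Fin.consEquiv, Fin.prod_univ_succ]
      have h2 := ((Fin.consEquiv (fun _ : Fin (m+1) => ℕ)).hasSum_iff
        (f := fun y : Fin (m+1) → ℕ => ∏ i, f i (y i))
        (a := s 0 * ∏ i : Fin m, s i.succ)).mp
      rw [heq] at h2
      have hfin := h2 hmul
      rwa [Fin.prod_univ_succ]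


lemma tsum_cauchy_schwarz {α : Type*} {f g : α → ℝ} (hf : ∀ a, 0 ≤ f a) (hg : ∀ a, 0 ≤ g a)
    (hf2 : Summable (fun a => f a ^ 2)) (hg2 : Summable (fun a => g a ^ 2)) :
    (∑' a, f a * g a) ^ 2 ≤ (∑' a, f a ^ 2) * (∑' a, g a ^ 2) := by
  have hfg : Summable (fun a => f a * g a) := by
    apply Summable.of_nonneg_of_le (fun a => mul_nonneg (hf a) (hg a))
      (fun a => ?_) (hf2.add hg2)
    nlinarith [sq_nonneg (f a - g a), mul_nonneg (hf a) (hg a)]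
  have hA : (0:ℝ) ≤ ∑' a, f a ^ 2 := tsum_nonneg (fun a => sq_nonneg _)
  have hB : (0:ℝ) ≤ ∑' a, g a ^ 2 := tsum_nonneg (fun a => sq_nonneg _)
  have key : ∑' a, f a * g a ≤ Real.sqrt ((∑' a, f a ^ 2) * (∑' a, g a ^ 2)) := by
    apply Summable.tsum_le_of_sum_le hfg
    intro s
    have h1 : (∑ a ∈ s, f a * g a) ^ 2 ≤ (∑ a ∈ s, f a ^ 2) * (∑ a ∈ s, g a ^ 2) :=
      Finset.sum_mul_sq_le_sq_mul_sq s f g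
    have h2 : (∑ a ∈ s, f a ^ 2) ≤ ∑' a, f a ^ 2 :=
      Summable.sum_le_tsum s (fun a _ => sq_nonneg _) hf2
    have h3 : (∑ a ∈ s, g a ^ 2) ≤ ∑' a, g a ^ 2 :=
      Summable.sum_le_tsum s (fun a _ => sq_nonneg _) hg2
    have h4 : (∑ a ∈ s, f a * g a) ^ 2 ≤ (∑' a, f a ^ 2) * (∑' a, g a ^ 2) := by
      calc (∑ a ∈ s, f a * g a) ^ 2 ≤ (∑ a ∈ s, f a ^ 2) * (∑ a ∈ s, g a ^ 2) := h1
        _ ≤ (∑' a, f a ^ 2) * (∑' a, g a ^ 2) := by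
            apply mul_le_mul h2 h3 (Finset.sum_nonneg fun a _ => sq_nonneg _) hA
    have h5 : (0:ℝ) ≤ ∑ a ∈ s, f a * g a :=
      Finset.sum_nonneg fun a _ => mul_nonneg (hf a) (hg a)
    calc ∑ a ∈ s, f a * g a = Real.sqrt ((∑ a ∈ s, f a * g a)^2) := (Real.sqrt_sq h5).symm
      _ ≤ Real.sqrt ((∑' a, f a ^ 2) * (∑' a, g a ^ 2)) := Real.sqrt_le_sqrt h4
  have hnn : (0:ℝ) ≤ ∑' a, f a * g a := tsum_nonneg fun a => mul_nonneg (hf a) (hg a)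
  calc (∑' a, f a * g a)^2 ≤ Real.sqrt ((∑' a, f a ^ 2) * (∑' a, g a ^ 2)) ^ 2 := by
        apply pow_le_pow_left₀ hnn key
    _ = (∑' a, f a ^ 2) * (∑' a, g a ^ 2) := Real.sq_sqrt (mul_nonneg hA hB)

lemma kl_coord_bound {a b γ : ℝ} (hγ : 0 < γ) (ha : γ ≤ a) (hb : γ ≤ b) :
    (b - a) + (Real.log a - Real.log b) * a ≤ a/γ * |a - b| := by
  have ha0 : 0 < a := hγ.trans_le ha
  have hb0 : 0 < b := hγ.trans_le hb
  rcases le_total b a with hba | hab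
  · rw [abs_of_nonneg (by linarith)]
    have hl : Real.log a - Real.log b ≤ (a-b)/b := by
      rw [← Real.log_div ha0.ne' hb0.ne']
      have h := Real.log_le_sub_one_of_pos (div_pos ha0 hb0)
      have h2 : a/b - 1 = (a-b)/b := by field_simp
      linarith
    have h2 : (Real.log a - Real.log b) * a ≤ (a-b)/b * a :=
      mul_le_mul_of_nonneg_right hl ha0.le
    have h3 : (a-b)/b * a ≤ (a-b)/γ * a := by
      apply mul_le_mul_of_nonneg_right _ ha0.le
      exact div_le_div_of_nonneg_left (by linarith) hγ hb
    have h4 : (a-b)/γ * a = a/γ * (a-b) := by ring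
    linarith
  · rw [abs_of_nonpos (by linarith)]
    have hl : Real.log a ≤ Real.log b := Real.log_le_log ha0 hab
    have h2 : (Real.log a - Real.log b) * a ≤ 0 :=
      mul_nonpos_of_nonpos_of_nonneg (by linarith) ha0.le
    have h3 : 1 ≤ a/γ := (one_le_div hγ).mpr ha
    nlinarith

lemma log_poi {c : ℝ} (hc : 0 < c) (k : ℕ) :
    Real.log (poi c k) = -c + (k : ℝ) * Real.log c - Real.log (Nat.factorial k) := by
  unfold poi
  rw [Real.log_div (by positivity) (by positivity), Real.log_mul (Real.exp_ne_zero _)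
    (by positivity), Real.log_exp, Real.log_pow]

/-- L1 distance bound between product Poisson regression distributions in fixed
design: with `p(y|x_i;θ) = Poisson(⟨θ,x_i⟩)`, `‖θ‖₂ ≤ w`, `⟨θ,x_i⟩, ⟨θ',x_i⟩ ≥ γ > 0`
and `‖x_i‖₂ ≤ R`, we have `‖f(·;θ) − f(·;θ')‖₁ ≤ R √(2 n w ‖θ−θ'‖₂ / γ)`. -/
theorem l1_poisson_regression
    {d n : ℕ} (x : Fin n → EuclideanSpace ℝ (Fin d))
    (θ θ' : EuclideanSpace ℝ (Fin d)) (w γ R : ℝ)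
    (hw : ‖θ‖ ≤ w) (hγ : 0 < γ)
    (hθ : ∀ i, γ ≤ (inner ℝ θ (x i) : ℝ))
    (hθ' : ∀ i, γ ≤ (inner ℝ θ' (x i) : ℝ))
    (hR : ∀ i, ‖x i‖ ≤ R) :
    (∑' y : Fin n → ℕ,
        |(∏ i, Real.exp (-(inner ℝ θ (x i) : ℝ)) * (inner ℝ θ (x i) : ℝ) ^ (y i)
             / (Nat.factorial (y i)))
          - ∏ i, Real.exp (-(inner ℝ θ' (x i) : ℝ)) * (inner ℝ θ' (x i) : ℝ) ^ (y i)
             / (Nat.factorial (y i))|)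
      ≤ R * Real.sqrt (2 * n * w * ‖θ - θ'‖ / γ) := by
  rcases Nat.eq_zero_or_pos n with hn | hn
  · subst hn
    have h0 : ∀ y : Fin 0 → ℕ,
        |(∏ i, Real.exp (-(inner ℝ θ (x i) : ℝ)) * (inner ℝ θ (x i) : ℝ) ^ (y i)
             / (Nat.factorial (y i)))
          - ∏ i, Real.exp (-(inner ℝ θ' (x i) : ℝ)) * (inner ℝ θ' (x i) : ℝ) ^ (y i)
             / (Nat.factorial (y i))| = 0 := by
      intro y; simp
    rw [tsum_congr h0, tsum_zero]
    have h1 : (2 * ((0:ℕ):ℝ) * w * ‖θ - θ'‖ / γ) = 0 := by norm_num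
    rw [h1, Real.sqrt_zero, mul_zero]
  classical
  set a : Fin n → ℝ := fun i => (inner ℝ θ (x i) : ℝ) with ha_def
  set b : Fin n → ℝ := fun i => (inner ℝ θ' (x i) : ℝ) with hb_def
  have ha0 : ∀ i, 0 < a i := fun i => hγ.trans_le (hθ i)
  have hb0 : ∀ i, 0 < b i := fun i => hγ.trans_le (hθ' i)
  set P : (Fin n → ℕ) → ℝ := fun y => ∏ i, poi (a i) (y i) with hP_def
  set Q : (Fin n → ℕ) → ℝ := fun y => ∏ i, poi (b i) (y i) with hQ_def
  have hPpos : ∀ y, 0 < P y := fun y => Finset.prod_pos fun i _ => poi_pos (ha0 i) _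
  have hQpos : ∀ y, 0 < Q y := fun y => Finset.prod_pos fun i _ => poi_pos (hb0 i) _
  have hP : HasSum P 1 := by
    have := pi_hasSum n (fun i => poi (a i)) (fun _ => 1)
      (fun i k => (poi_pos (ha0 i) k).le) (fun i => hasSum_poi (a i))
    simpa using this
  have hQ : HasSum Q 1 := by
    have := pi_hasSum n (fun i => poi (b i)) (fun _ => 1)
      (fun i k => (poi_pos (hb0 i) k).le) (fun i => hasSum_poi (b i))
    simpa using this
  -- marginal means
  have hPmean : ∀ j, HasSum (fun y : Fin n → ℕ => ((y j : ℕ) : ℝ) * P y) (a j) := by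
    intro j
    have hsum := pi_hasSum n
      (fun i k => (if i = j then (k:ℝ) else 1) * poi (a i) k)
      (fun i => if i = j then a i else 1)
      (fun i k => by
        apply mul_nonneg _ (poi_pos (ha0 i) k).le
        split <;> positivity)
      (fun i => by
        by_cases hij : i = j
        · subst hij
          simpa only [if_pos rfl, ↓reduceIte] using hasSum_poi_mul (a i)
        · simp only [if_neg hij]
          simpa using (hasSum_poi (a i)))
    have he1 : (fun y : Fin n → ℕ =>
        ∏ i, (if i = j then ((y i : ℕ):ℝ) else 1) * poi (a i) (y i))
        = fun y : Fin n → ℕ => ((y j : ℕ):ℝ) * P y := by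
      funext y
      rw [Finset.prod_mul_distrib]
      congr 1
      rw [Finset.prod_ite_eq' Finset.univ j (fun i => ((y i : ℕ):ℝ))]
      simp
    have he2 : (∏ i, (if i = j then a i else 1)) = a j := by
      rw [Finset.prod_ite_eq' Finset.univ j a]
      simp
    rw [he1, he2] at hsum
    exact hsum
  -- KL identity
  set dl : Fin n → ℝ := fun i => Real.log (a i) - Real.log (b i) with hdl_def
  set K : ℝ := ∑ i, ((b i - a i) + dl i * a i) with hK_def
  have hKL : HasSum (fun y => P y * Real.log (P y / Q y)) K := by
    have hterm : ∀ i : Fin n, HasSum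
        (fun y : Fin n → ℕ => (b i - a i) * P y + dl i * (((y i : ℕ):ℝ) * P y))
        ((b i - a i) + dl i * a i) := by
      intro i
      have h1 := hP.mul_left (b i - a i)
      have h2 := (hPmean i).mul_left (dl i)
      simpa using h1.add h2
    have hsum := hasSum_sum (fun (i : Fin n) (_ : i ∈ Finset.univ) => hterm i)
    have heq : (fun y : Fin n → ℕ =>
        ∑ i, ((b i - a i) * P y + dl i * (((y i : ℕ):ℝ) * P y)))
        = fun y => P y * Real.log (P y / Q y) := by
      funext y
      have hlogP : Real.log (P y) = ∑ i, (-(a i) + ((y i : ℕ):ℝ) * Real.log (a i)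
          - Real.log (Nat.factorial (y i))) := by
        rw [hP_def]
        rw [Real.log_prod (fun i _ => (poi_pos (ha0 i) (y i)).ne')]
        exact Finset.sum_congr rfl fun i _ => log_poi (ha0 i) (y i)
      have hlogQ : Real.log (Q y) = ∑ i, (-(b i) + ((y i : ℕ):ℝ) * Real.log (b i)
          - Real.log (Nat.factorial (y i))) := by
        rw [hQ_def]
        rw [Real.log_prod (fun i _ => (poi_pos (hb0 i) (y i)).ne')]
        exact Finset.sum_congr rfl fun i _ => log_poi (hb0 i) (y i)
      rw [Real.log_div (hPpos y).ne' (hQpos y).ne', hlogP, hlogQ, ← Finset.sum_sub_distrib,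
        Finset.mul_sum]
      apply Finset.sum_congr rfl
      intro i _
      simp only [hdl_def]
      ring
    rw [heq] at hsum
    rw [hK_def]
    exact hsum
  -- Pinsker
  set T : (Fin n → ℕ) → ℝ := fun y => P y * Real.log (P y / Q y) - P y + Q y with hT_def
  have hT : HasSum T K := by
    have := (hKL.sub hP).add hQ
    have h2 : K - 1 + 1 = K := by ring
    rwa [h2] at this
  set m : (Fin n → ℕ) → ℝ := fun y => (P y + 2 * Q y) / 3 with hm_def
  have hmpos : ∀ y, 0 < m y := fun y => by
    have := hPpos y; have := hQpos y
    simp only [hm_def]; positivity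
  have hm : HasSum m 1 := by
    have := (hP.add (hQ.mul_left 2)).div_const 3
    have h2 : ((1:ℝ) + 2 * 1) / 3 = 1 := by norm_num
    rwa [h2] at this
  have hpt : ∀ y, (P y - Q y)^2 / m y ≤ 2 * T y := by
    intro y
    have h := pinsker_pointwise (hPpos y) (hQpos y)
    rw [div_le_iff₀ (hmpos y)]
    simp only [hm_def, hT_def]
    nlinarith [h]
  have hTnn : ∀ y, 0 ≤ T y := by
    intro y
    simp only [hT_def]
    nlinarith [pinsker_pointwise (hPpos y) (hQpos y), hPpos y, hQpos y, sq_nonneg (P y - Q y)]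
  -- reduce goal to P, Q
  show (∑' y : Fin n → ℕ, |P y - Q y|) ≤ R * Real.sqrt (2 * n * w * ‖θ - θ'‖ / γ)
  -- summability of the Pinsker quotient
  have hFnn : ∀ y, 0 ≤ (P y - Q y)^2 / m y := fun y => div_nonneg (sq_nonneg _) (hmpos y).le
  have h2T : Summable (fun y => 2 * T y) := hT.summable.mul_left 2
  have hFs : Summable (fun y => (P y - Q y)^2 / m y) :=
    Summable.of_nonneg_of_le hFnn hpt h2T
  have hFle : ∑' y, (P y - Q y)^2 / m y ≤ 2 * K := by
    have h := Summable.tsum_le_tsum hpt hFs h2T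
    rwa [tsum_mul_left, hT.tsum_eq] at h
  -- Cauchy–Schwarz
  have hcs := tsum_cauchy_schwarz (f := fun y => |P y - Q y| / Real.sqrt (m y))
      (g := fun y => Real.sqrt (m y))
      (fun y => div_nonneg (abs_nonneg _) (Real.sqrt_nonneg _))
      (fun y => Real.sqrt_nonneg _)
      ?_ ?_
  rotate_left
  · apply Summable.congr hFs
    intro y
    rw [div_pow, sq_abs, Real.sq_sqrt (hmpos y).le]
  · apply Summable.congr hm.summable
    intro y
    rw [Real.sq_sqrt (hmpos y).le]
  have e0 : ∑' y, (|P y - Q y| / Real.sqrt (m y)) * Real.sqrt (m y) = ∑' y, |P y - Q y| :=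
    tsum_congr fun y => div_mul_cancel₀ _ ((Real.sqrt_ne_zero').mpr (hmpos y))
  have e1 : ∑' y, (|P y - Q y| / Real.sqrt (m y))^2 = ∑' y, (P y - Q y)^2 / m y :=
    tsum_congr fun y => by rw [div_pow, sq_abs, Real.sq_sqrt (hmpos y).le]
  have e2 : ∑' y, (Real.sqrt (m y))^2 = 1 := by
    rw [tsum_congr fun y => Real.sq_sqrt (hmpos y).le, hm.tsum_eq]
  rw [e0, e1, e2, mul_one] at hcs
  -- bound K
  have hwnn : 0 ≤ w := le_trans (norm_nonneg θ) hw
  have hRnn : 0 ≤ R := le_trans (norm_nonneg (x ⟨0, hn⟩)) (hR ⟨0, hn⟩)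
  have hKb : K ≤ (n : ℝ) * (w * R / γ * (‖θ - θ'‖ * R)) := by
    rw [hK_def]
    have hper : ∀ i ∈ Finset.univ, (b i - a i) + dl i * a i ≤ w * R / γ * (‖θ - θ'‖ * R) := by
      intro i _
      have h1 := kl_coord_bound hγ (hθ i) (hθ' i)
      have h2 : a i ≤ w * R :=
        le_trans (real_inner_le_norm θ (x i)) (mul_le_mul hw (hR i) (norm_nonneg _) hwnn)
      have h3 : |a i - b i| ≤ ‖θ - θ'‖ * R := by
        have he : a i - b i = (inner ℝ (θ - θ') (x i) : ℝ) := by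
          simp [ha_def, hb_def, inner_sub_left]
        rw [he]
        exact le_trans (abs_real_inner_le_norm _ _)
          (mul_le_mul_of_nonneg_left (hR i) (norm_nonneg _))
      calc (b i - a i) + dl i * a i ≤ a i / γ * |a i - b i| := h1
        _ ≤ w * R / γ * (‖θ - θ'‖ * R) := by
            apply mul_le_mul ((div_le_div_iff_of_pos_right hγ).mpr h2) h3 (abs_nonneg _) (by positivity)
    calc (∑ i, ((b i - a i) + dl i * a i)) ≤ ∑ _i : Fin n, w * R / γ * (‖θ - θ'‖ * R) :=
          Finset.sum_le_sum hper
      _ = (n : ℝ) * (w * R / γ * (‖θ - θ'‖ * R)) := by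
          rw [Finset.sum_const, Finset.card_univ, Fintype.card_fin, nsmul_eq_mul]
  -- conclude
  have hLnn : 0 ≤ ∑' y, |P y - Q y| := tsum_nonneg fun y => abs_nonneg _
  have hchain : (∑' y, |P y - Q y|)^2 ≤ R^2 * (2 * n * w * ‖θ - θ'‖ / γ) := by
    have : (2:ℝ) * ((n : ℝ) * (w * R / γ * (‖θ - θ'‖ * R))) =
        R^2 * (2 * n * w * ‖θ - θ'‖ / γ) := by ring
    calc (∑' y, |P y - Q y|)^2 ≤ ∑' y, (P y - Q y)^2 / m y := hcs
      _ ≤ 2 * K := hFle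
      _ ≤ 2 * ((n : ℝ) * (w * R / γ * (‖θ - θ'‖ * R))) := by linarith
      _ = R^2 * (2 * n * w * ‖θ - θ'‖ / γ) := this
  have hsnn : 0 ≤ 2 * (n:ℝ) * w * ‖θ - θ'‖ / γ := by positivity
  calc (∑' y, |P y - Q y|) = Real.sqrt ((∑' y, |P y - Q y|)^2) := (Real.sqrt_sq hLnn).symm
    _ ≤ Real.sqrt (R^2 * (2 * n * w * ‖θ - θ'‖ / γ)) := Real.sqrt_le_sqrt hchain
    _ = R * Real.sqrt (2 * n * w * ‖θ - θ'‖ / γ) := by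
        rw [Real.sqrt_mul (sq_nonneg R), Real.sqrt_sq hRnn]
end

section
/- For the fixed-design Pareto regression family with p(y|x_i;θ) = Pareto(b, m_i(θ)) where m_i(θ) = ((b−1)/b)⟨θ,x_i⟩, assuming ⟨θ,x_i⟩, ⟨θ',x_i⟩ ≥ γ > 0 and ‖x_i‖₂ ≤ R for all i, the L1 distance between product distributions satisfies ‖f(·;θ) − f(·;θ')‖₁ ≤ √(2bn‖θ−θ'‖₂ R / γ) (whenever all supports are nested so the KL is finite). -/
open MeasureTheory

/-- Truncated Pareto-type function. -/
noncomputable def paretoTrunc (b m c : ℝ) : ℝ → ℝ := fun t => if m ≤ t then c / t ^ (b + 1) else 0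

lemma paretoTrunc_nonneg {b m c : ℝ} (hm : 0 < m) (hc : 0 ≤ c) (t : ℝ) :
    0 ≤ paretoTrunc b m c t := by
  unfold paretoTrunc
  split
  · rename_i h
    have : (0:ℝ) < t ^ (b+1) := Real.rpow_pos_of_pos (lt_of_lt_of_le hm h) _
    positivity
  · exact le_refl 0

lemma paretoTrunc_integrable {b m : ℝ} (hb : 1 < b) (hm : 0 < m) (c : ℝ) :
    Integrable (paretoTrunc b m c) := by
  have h0 : paretoTrunc b m c = Set.indicator (Set.Ici m) (fun t => c / t ^ (b+1)) := by
    funext t; simp [paretoTrunc, Set.indicator_apply, Set.mem_Ici]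
  rw [h0]
  apply IntegrableOn.integrable_indicator _ measurableSet_Ici
  rw [integrableOn_Ici_iff_integrableOn_Ioi]
  have h1 : IntegrableOn (fun t : ℝ => c * t ^ (-(b+1))) (Set.Ioi m) :=
    ((integrableOn_Ioi_rpow_of_lt (by linarith) hm).const_mul c)
  apply h1.congr_fun _ measurableSet_Ioi
  intro t ht
  have htpos : 0 < t := lt_trans hm ht
  show c * t ^ (-(b+1)) = c / t ^ (b+1)
  rw [Real.rpow_neg htpos.le, div_eq_mul_inv]

lemma paretoTrunc_integral {b m : ℝ} (hb : 1 < b) (hm : 0 < m) (c : ℝ) :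
    ∫ t : ℝ, paretoTrunc b m c t = c * m ^ (-b) / b := by
  have h0 : paretoTrunc b m c = Set.indicator (Set.Ici m) (fun t => c / t ^ (b+1)) := by
    funext t; simp [paretoTrunc, Set.indicator_apply, Set.mem_Ici]
  rw [h0, integral_indicator measurableSet_Ici, integral_Ici_eq_integral_Ioi]
  have h1 : ∀ t ∈ Set.Ioi m, c / t ^ (b+1) = c * t ^ (-(b+1)) := by
    intro t ht
    have htpos : 0 < t := lt_trans hm (by exact ht)
    rw [Real.rpow_neg htpos.le, div_eq_mul_inv]
  rw [setIntegral_congr_fun measurableSet_Ioi h1, integral_const_mul,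
    integral_Ioi_rpow_of_lt (by linarith) hm]
  have h2 : -(b+1) + 1 = -b := by ring
  rw [h2]
  field_simp

lemma one_sub_exp_neg_sq_le {x : ℝ} (hx : 0 ≤ x) : (1 - Real.exp (-x)) ^ 2 ≤ x / 2 := by
  set f : ℝ → ℝ := fun t => t / 2 - (1 - Real.exp (-t)) ^ 2 with hf
  have hderiv : ∀ t : ℝ, HasDerivAt f (1/2 - 2 * (1 - Real.exp (-t)) * Real.exp (-t)) t := by
    intro t
    have h1 : HasDerivAt (fun s : ℝ => Real.exp (-s)) (-Real.exp (-t)) t := by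
      simpa [Function.comp_def] using (Real.hasDerivAt_exp (-t)).comp t (hasDerivAt_neg t)
    have h2 : HasDerivAt (fun s : ℝ => 1 - Real.exp (-s)) (Real.exp (-t)) t := by
      simpa [Pi.sub_def] using (hasDerivAt_const t (1:ℝ)).sub h1
    have h3 : HasDerivAt (fun s : ℝ => (1 - Real.exp (-s)) ^ 2)
        (2 * (1 - Real.exp (-t)) * Real.exp (-t)) t := by
      have := h2.pow 2
      simpa [Pi.pow_def, mul_comm, mul_assoc] using this
    have h4 := ((hasDerivAt_id t).div_const 2).sub h3
    simpa [Pi.sub_def] using h4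
  have hmono : MonotoneOn f (Set.Ici 0) := by
    apply monotoneOn_of_deriv_nonneg (convex_Ici 0)
    · exact Continuous.continuousOn (by fun_prop)
    · intro t _
      exact (hderiv t).differentiableAt.differentiableWithinAt
    · intro t _
      rw [(hderiv t).deriv]
      nlinarith [Real.exp_pos (-t), sq_nonneg (2 * Real.exp (-t) - 1)]
  have h0 : f 0 ≤ f x := hmono Set.self_mem_Ici hx hx
  simp only [hf, neg_zero, Real.exp_zero] at h0
  nlinarith [h0]

/-- Exact L1 distance between nested product Pareto densities. -/
lemma l1_pareto_aux {n : ℕ} (b : ℝ) (hb : 1 < b) (m m' : Fin n → ℝ)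
    (hm' : ∀ i, 0 < m' i) (hle : ∀ i, m' i ≤ m i) :
    (∫ y : Fin n → ℝ,
        |(∏ i, if m i ≤ y i then b * (m i) ^ b / (y i) ^ (b + 1) else 0)
          - ∏ i, if m' i ≤ y i then b * (m' i) ^ b / (y i) ^ (b + 1) else 0|)
      = 2 - 2 * Real.exp (-∑ i, b * (Real.log (m i) - Real.log (m' i))) := by
  have hb0 : (0:ℝ) < b := by linarith
  have hm : ∀ i, 0 < m i := fun i => lt_of_lt_of_le (hm' i) (hle i)
  set F : Fin n → ℝ → ℝ := fun i => paretoTrunc b (m i) (b * (m i) ^ b) with hF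
  set G : Fin n → ℝ → ℝ := fun i => paretoTrunc b (m' i) (b * (m' i) ^ b) with hG
  set H : Fin n → ℝ → ℝ := fun i => paretoTrunc b (m i) (b * (m' i) ^ b) with hH
  have hcG : ∀ i, 0 ≤ b * (m' i) ^ b := fun i =>
    mul_nonneg hb0.le (Real.rpow_nonneg (hm' i).le _)
  have hGnn : ∀ i t, 0 ≤ G i t := fun i t => paretoTrunc_nonneg (hm' i) (hcG i) t
  have hHnn : ∀ i t, 0 ≤ H i t := fun i t => paretoTrunc_nonneg (hm i) (hcG i) t
  -- pointwise identity
  have hpt : ∀ y : Fin n → ℝ,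
      |(∏ i, F i (y i)) - ∏ i, G i (y i)|
        = (∏ i, F i (y i)) + (∏ i, G i (y i)) - 2 * ∏ i, H i (y i) := by
    intro y
    by_cases hall : ∀ i, m i ≤ y i
    · have hGH : ∀ i, H i (y i) = G i (y i) := by
        intro i
        simp only [hH, hG, paretoTrunc]
        rw [if_pos (hall i), if_pos (le_trans (hle i) (hall i))]
      have hGF : ∀ i ∈ Finset.univ, G i (y i) ≤ F i (y i) := by
        intro i _
        simp only [hF, hG, paretoTrunc]
        rw [if_pos (hall i), if_pos (le_trans (hle i) (hall i))]
        have hy : (0:ℝ) < (y i) ^ (b+1) :=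
          Real.rpow_pos_of_pos (lt_of_lt_of_le (hm i) (hall i)) _
        have hnum : b * (m' i) ^ b ≤ b * (m i) ^ b := by
          have := Real.rpow_le_rpow (hm' i).le (hle i) hb0.le
          nlinarith
        exact (div_le_div_iff_of_pos_right hy).mpr hnum
      have hle2 : (∏ i, G i (y i)) ≤ ∏ i, F i (y i) :=
        Finset.prod_le_prod (fun i _ => hGnn i (y i)) hGF
      rw [Finset.prod_congr rfl (fun i _ => hGH i), abs_of_nonneg (by linarith)]
      ring
    · push_neg at hall
      obtain ⟨j, hj⟩ := hall
      have hFj : F j (y j) = 0 := by simp [hF, paretoTrunc, not_le.mpr hj]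
      have hHj : H j (y j) = 0 := by simp [hH, paretoTrunc, not_le.mpr hj]
      have hPF : (∏ i, F i (y i)) = 0 := Finset.prod_eq_zero (Finset.mem_univ j) hFj
      have hPH : (∏ i, H i (y i)) = 0 := Finset.prod_eq_zero (Finset.mem_univ j) hHj
      rw [hPF, hPH, zero_sub, abs_neg,
        abs_of_nonneg (Finset.prod_nonneg (fun i _ => hGnn i (y i)))]
      ring
  have hFint : Integrable (fun y : Fin n → ℝ => ∏ i, F i (y i)) :=
    Integrable.fintype_prod (fun i => paretoTrunc_integrable hb (hm i) _)
  have hGint : Integrable (fun y : Fin n → ℝ => ∏ i, G i (y i)) :=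
    Integrable.fintype_prod (fun i => paretoTrunc_integrable hb (hm' i) _)
  have hHint : Integrable (fun y : Fin n → ℝ => ∏ i, H i (y i)) :=
    Integrable.fintype_prod (fun i => paretoTrunc_integrable hb (hm i) _)
  have hsum : Integrable (fun y : Fin n → ℝ => (∏ i, F i (y i)) + ∏ i, G i (y i)) :=
    hFint.add hGint
  have h2H : Integrable (fun y : Fin n → ℝ => 2 * ∏ i, H i (y i)) := hHint.const_mul 2
  have goalrw : (∫ y : Fin n → ℝ,
        |(∏ i, if m i ≤ y i then b * (m i) ^ b / (y i) ^ (b + 1) else 0)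
          - ∏ i, if m' i ≤ y i then b * (m' i) ^ b / (y i) ^ (b + 1) else 0|)
      = ∫ y : Fin n → ℝ,
        (((∏ i, F i (y i)) + ∏ i, G i (y i)) - 2 * ∏ i, H i (y i)) := by
    apply integral_congr_ae
    filter_upwards with y
    rw [← hpt y]
    rfl
  rw [goalrw, integral_sub hsum h2H, integral_add hFint hGint, integral_const_mul,
    MeasureTheory.integral_fintype_prod_volume_eq_prod F,
    MeasureTheory.integral_fintype_prod_volume_eq_prod G,
    MeasureTheory.integral_fintype_prod_volume_eq_prod H]
  have hIF : ∀ i, (∫ t, F i t) = 1 := by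
    intro i
    rw [hF]
    rw [paretoTrunc_integral hb (hm i)]
    have h1 : (m i) ^ b * (m i) ^ (-b) = 1 := by
      rw [← Real.rpow_add (hm i), add_neg_cancel, Real.rpow_zero]
    field_simp
    nlinarith [h1]
  have hIG : ∀ i, (∫ t, G i t) = 1 := by
    intro i
    rw [hG]
    rw [paretoTrunc_integral hb (hm' i)]
    have h1 : (m' i) ^ b * (m' i) ^ (-b) = 1 := by
      rw [← Real.rpow_add (hm' i), add_neg_cancel, Real.rpow_zero]
    field_simp
    nlinarith [h1]
  have hIH : ∀ i, (∫ t, H i t) = Real.exp (-(b * (Real.log (m i) - Real.log (m' i)))) := by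
    intro i
    rw [hH]
    rw [paretoTrunc_integral hb (hm i)]
    calc b * (m' i) ^ b * (m i) ^ (-b) / b = (m' i) ^ b * (m i) ^ (-b) := by
          field_simp
      _ = Real.exp (-(b * (Real.log (m i) - Real.log (m' i)))) := by
          rw [Real.rpow_def_of_pos (hm' i), Real.rpow_def_of_pos (hm i), ← Real.exp_add]
          congr 1
          ring
  rw [Finset.prod_congr rfl (fun i _ => hIF i), Finset.prod_congr rfl (fun i _ => hIG i),
    Finset.prod_congr rfl (fun i _ => hIH i), Finset.prod_const_one,
    ← Real.exp_sum, Finset.sum_neg_distrib]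
  ring

/-- L1 distance bound between product Pareto regression distributions in fixed
design: with `p(y|x_i;θ) = Pareto(b, m_i(θ))`, `m_i(θ) = ((b−1)/b)⟨θ,x_i⟩`,
`⟨θ,x_i⟩, ⟨θ',x_i⟩ ≥ γ > 0`, `‖x_i‖₂ ≤ R`, and nested supports
(`⟨θ',x_i⟩ ≤ ⟨θ,x_i⟩` for all `i`), we have
`‖f(·;θ) − f(·;θ')‖₁ ≤ √(2 b n ‖θ−θ'‖₂ R / γ)`. -/
theorem l1_pareto_regression
    {d n : ℕ} (x : Fin n → EuclideanSpace ℝ (Fin d))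
    (θ θ' : EuclideanSpace ℝ (Fin d)) (b γ R : ℝ)
    (hb : 1 < b) (hγ : 0 < γ)
    (hθ : ∀ i, γ ≤ (inner ℝ θ (x i) : ℝ))
    (hθ' : ∀ i, γ ≤ (inner ℝ θ' (x i) : ℝ))
    (hnested : ∀ i, (inner ℝ θ' (x i) : ℝ) ≤ (inner ℝ θ (x i) : ℝ))
    (hR : ∀ i, ‖x i‖ ≤ R) :
    (∫ y : Fin n → ℝ,
        |(∏ i, if ((b - 1) / b) * (inner ℝ θ (x i) : ℝ) ≤ y i then
              b * (((b - 1) / b) * (inner ℝ θ (x i) : ℝ)) ^ b / (y i) ^ (b + 1)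
            else 0)
          - ∏ i, if ((b - 1) / b) * (inner ℝ θ' (x i) : ℝ) ≤ y i then
              b * (((b - 1) / b) * (inner ℝ θ' (x i) : ℝ)) ^ b / (y i) ^ (b + 1)
            else 0|)
      ≤ Real.sqrt (2 * b * n * ‖θ - θ'‖ * R / γ) := by
  have hbpos : (0:ℝ) < b := by linarith
  have hc : (0:ℝ) < (b - 1) / b := div_pos (by linarith) hbpos
  have htpos : ∀ i, (0:ℝ) < (inner ℝ θ (x i) : ℝ) := fun i => lt_of_lt_of_le hγ (hθ i)
  have ht'pos : ∀ i, (0:ℝ) < (inner ℝ θ' (x i) : ℝ) := fun i => lt_of_lt_of_le hγ (hθ' i)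
  have hm' : ∀ i, 0 < ((b - 1) / b) * (inner ℝ θ' (x i) : ℝ) :=
    fun i => mul_pos hc (ht'pos i)
  have hle : ∀ i, ((b - 1) / b) * (inner ℝ θ' (x i) : ℝ)
      ≤ ((b - 1) / b) * (inner ℝ θ (x i) : ℝ) :=
    fun i => mul_le_mul_of_nonneg_left (hnested i) hc.le
  rw [l1_pareto_aux b hb _ _ hm' hle]
  set K := ∑ i : Fin n, b * (Real.log (((b - 1) / b) * (inner ℝ θ (x i) : ℝ))
      - Real.log (((b - 1) / b) * (inner ℝ θ' (x i) : ℝ))) with hK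
  have hterm : ∀ i, Real.log (((b - 1) / b) * (inner ℝ θ (x i) : ℝ))
      - Real.log (((b - 1) / b) * (inner ℝ θ' (x i) : ℝ))
      = Real.log (inner ℝ θ (x i) : ℝ) - Real.log (inner ℝ θ' (x i) : ℝ) := by
    intro i
    rw [Real.log_mul (ne_of_gt hc) (ne_of_gt (htpos i)),
      Real.log_mul (ne_of_gt hc) (ne_of_gt (ht'pos i))]
    ring
  have hK0 : 0 ≤ K := by
    apply Finset.sum_nonneg
    intro i _
    have hlog := Real.log_le_log (hm' i) (hle i)
    nlinarith
  have hbound : ∀ i ∈ Finset.univ, b * (Real.log (((b - 1) / b) * (inner ℝ θ (x i) : ℝ))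
      - Real.log (((b - 1) / b) * (inner ℝ θ' (x i) : ℝ)))
      ≤ b * ((‖θ - θ'‖ * R) / γ) := by
    intro i _
    rw [hterm i]
    have h1 := Real.log_le_sub_one_of_pos
      (div_pos (htpos i) (ht'pos i))
    rw [Real.log_div (ne_of_gt (htpos i)) (ne_of_gt (ht'pos i))] at h1
    have h2 : (inner ℝ θ (x i) : ℝ) / (inner ℝ θ' (x i) : ℝ) - 1
        = ((inner ℝ θ (x i) : ℝ) - (inner ℝ θ' (x i) : ℝ)) / (inner ℝ θ' (x i) : ℝ) := by
      rw [sub_div, div_self (ne_of_gt (ht'pos i))]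
    have h3 : ((inner ℝ θ (x i) : ℝ) - (inner ℝ θ' (x i) : ℝ)) / (inner ℝ θ' (x i) : ℝ)
        ≤ ((inner ℝ θ (x i) : ℝ) - (inner ℝ θ' (x i) : ℝ)) / γ := by
      rw [div_eq_mul_one_div ((inner ℝ θ (x i) : ℝ) - (inner ℝ θ' (x i) : ℝ)),
        div_eq_mul_one_div ((inner ℝ θ (x i) : ℝ) - (inner ℝ θ' (x i) : ℝ)) γ]
      exact mul_le_mul_of_nonneg_left (one_div_le_one_div_of_le hγ (hθ' i))
        (sub_nonneg.mpr (hnested i))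
    have hcs : (inner ℝ θ (x i) : ℝ) - (inner ℝ θ' (x i) : ℝ) ≤ ‖θ - θ'‖ * R := by
      have h4 := real_inner_le_norm (θ - θ') (x i)
      rw [inner_sub_left] at h4
      have h5 : ‖θ - θ'‖ * ‖x i‖ ≤ ‖θ - θ'‖ * R :=
        mul_le_mul_of_nonneg_left (hR i) (norm_nonneg _)
      linarith
    have h6 : ((inner ℝ θ (x i) : ℝ) - (inner ℝ θ' (x i) : ℝ)) / γ ≤ (‖θ - θ'‖ * R) / γ :=
      (div_le_div_iff_of_pos_right hγ).mpr hcs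
    have h7 : Real.log (inner ℝ θ (x i) : ℝ) - Real.log (inner ℝ θ' (x i) : ℝ)
        ≤ (‖θ - θ'‖ * R) / γ := by linarith
    exact mul_le_mul_of_nonneg_left h7 hbpos.le
  have hKle : K ≤ n * (b * ((‖θ - θ'‖ * R) / γ)) := by
    calc K ≤ ∑ _i : Fin n, b * ((‖θ - θ'‖ * R) / γ) := Finset.sum_le_sum hbound
      _ = n * (b * ((‖θ - θ'‖ * R) / γ)) := by
          rw [Finset.sum_const, Finset.card_univ, Fintype.card_fin, nsmul_eq_mul]
  have hexp1 : Real.exp (-K) ≤ 1 := by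
    have := Real.exp_le_exp.mpr (neg_nonpos.mpr hK0)
    rwa [Real.exp_zero] at this
  have hnn : 0 ≤ 2 - 2 * Real.exp (-K) := by linarith
  have hsq : (2 - 2 * Real.exp (-K)) ^ 2 ≤ 2 * K := by
    have := one_sub_exp_neg_sq_le hK0
    nlinarith
  have h2K : 2 * K ≤ 2 * b * ↑n * ‖θ - θ'‖ * R / γ := by
    have heq : 2 * ((n : ℝ) * (b * ((‖θ - θ'‖ * R) / γ))) = 2 * b * ↑n * ‖θ - θ'‖ * R / γ := by
      ring
    linarith [hKle]
  have hrhs0 : 0 ≤ 2 * b * ↑n * ‖θ - θ'‖ * R / γ := by linarith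
  exact (Real.le_sqrt hnn hrhs0).mpr (le_trans hsq h2K)
end

section
/- Let y_i ~ Poisson(μ_i) independently with μ_i ≥ γ > 0 for all i, and let Z = Σ_i (y_i − μ_i) x_i with x_i ∈ ℝ. Then E[Z⁴] ≤ (3 + 1/γ)·(E[Z²])², i.e., Z is hyper-contractive with η⁴ = 3 + 1/γ. -/
open MeasureTheory ProbabilityTheory
open scoped NNReal ENNReal

namespace PoissonHC

/-- falling-factorial-like product -/
noncomputable def ff (k : ℕ) (n : ℕ) : ℝ := ∏ j ∈ Finset.range k, ((n : ℝ) - j)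

lemma fact_mul_ff (k : ℕ) : ∀ m : ℕ, (m.factorial : ℝ) * ff k (m + k) = ((m+k).factorial : ℝ) := by
  induction k with
  | zero => intro m; simp [ff]
  | succ k ih =>
    intro m
    have h : m + (k + 1) = (m + 1) + k := by omega
    rw [h, ff, Finset.prod_range_succ]
    have h2 : ((m + 1 + k : ℕ) : ℝ) - k = (m : ℝ) + 1 := by push_cast; ring
    have := ih (m + 1)
    rw [ff] at this
    have hfac : ((m+1).factorial : ℝ) = (m.factorial : ℝ) * (m + 1) := by
      rw [Nat.factorial_succ]; push_cast; ring
    rw [h2, ← this, hfac]; ring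

lemma hasSum_ff (r : ℝ≥0) (k : ℕ) :
    HasSum (fun n => poissonPMFReal r n * ff k n) ((r : ℝ) ^ k) := by
  have hinj : Function.Injective (· + k : ℕ → ℕ) := add_left_injective k
  have h0 : ∀ n ∉ Set.range (· + k : ℕ → ℕ), poissonPMFReal r n * ff k n = 0 := by
    intro n hn
    have hnk : n < k := by
      by_contra h
      exact hn ⟨n - k, by simp; omega⟩
    have : ff k n = 0 := by
      apply Finset.prod_eq_zero (Finset.mem_range.2 hnk)
      simp
    rw [this, mul_zero]
  rw [← Function.Injective.hasSum_iff hinj h0]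
  have hcomp : ((fun n => poissonPMFReal r n * ff k n) ∘ (· + k : ℕ → ℕ)) =
      fun m => (r : ℝ) ^ k * poissonPMFReal r m := by
    funext m
    simp only [Function.comp_apply]
    have h1 := fact_mul_ff k m
    have hm : (m.factorial : ℝ) ≠ 0 := Nat.cast_ne_zero.2 m.factorial_ne_zero
    have hmk : ((m + k).factorial : ℝ) ≠ 0 := Nat.cast_ne_zero.2 (m + k).factorial_ne_zero
    have hff : ff k (m + k) = ((m + k).factorial : ℝ) / (m.factorial : ℝ) := by
      field_simp at h1 ⊢
      linarith [h1]
    rw [hff]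
    unfold poissonPMFReal
    rw [pow_add]
    field_simp
  rw [hcomp]
  simpa [poissonPMFReal] using (poissonPMFRealSum r).mul_left ((r : ℝ) ^ k)

lemma ff_eval (n : ℕ) : ff 0 n = 1 ∧ ff 1 n = (n:ℝ) ∧ ff 2 n = (n:ℝ)*((n:ℝ)-1) ∧
    ff 3 n = (n:ℝ)*((n:ℝ)-1)*((n:ℝ)-2) ∧ ff 4 n = (n:ℝ)*((n:ℝ)-1)*((n:ℝ)-2)*((n:ℝ)-3) := by
  refine ⟨?_, ?_, ?_, ?_, ?_⟩ <;>
    simp [ff, Finset.prod_range_succ] <;> ring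

lemma hasSum_centered (r : ℝ≥0) :
    HasSum (fun n => poissonPMFReal r n * ((n:ℝ) - r)) 0 ∧
    HasSum (fun n => poissonPMFReal r n * ((n:ℝ) - r)^2) (r:ℝ) ∧
    HasSum (fun n => poissonPMFReal r n * ((n:ℝ) - r)^3) (r:ℝ) ∧
    HasSum (fun n => poissonPMFReal r n * ((n:ℝ) - r)^4) (3*(r:ℝ)^2 + r) := by
  set R := (r : ℝ) with hR
  have h0 := hasSum_ff r 0
  have h1 := hasSum_ff r 1
  have h2 := hasSum_ff r 2
  have h3 := hasSum_ff r 3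
  have h4 := hasSum_ff r 4
  refine ⟨?_, ?_, ?_, ?_⟩
  · have H := h1.add (h0.mul_left (-R))
    convert H using 1
    · funext n
      obtain ⟨e0, e1, -⟩ := ff_eval n
      rw [e0, e1]; ring
    · ring
  · have H := (h2.add (h1.mul_left (1 - 2*R))).add (h0.mul_left (R^2))
    convert H using 1
    · funext n
      obtain ⟨e0, e1, e2, -⟩ := ff_eval n
      rw [e0, e1, e2]; ring
    · ring
  · have H := ((h3.add (h2.mul_left (3 - 3*R))).add
      (h1.mul_left (1 - 3*R + 3*R^2))).add (h0.mul_left (-R^3))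
    convert H using 1
    · funext n
      obtain ⟨e0, e1, e2, e3, -⟩ := ff_eval n
      rw [e0, e1, e2, e3]; ring
    · ring
  · have H := (((h4.add (h3.mul_left (6 - 4*R))).add
      (h2.mul_left (7 - 12*R + 6*R^2))).add
      (h1.mul_left (1 - 4*R + 6*R^2 - 4*R^3))).add (h0.mul_left (R^4))
    convert H using 1
    · funext n
      obtain ⟨e0, e1, e2, e3, e4⟩ := ff_eval n
      rw [e0, e1, e2, e3, e4]; ring
    · ring

lemma poissonMeasure_singleton (r : ℝ≥0) (a : ℕ) :
    poissonMeasure r {a} = ENNReal.ofReal (poissonPMFReal r a) := by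
  exact ProbabilityTheory.poissonMeasure_singleton r a

lemma integrable_of_le_hasSum {r : ℝ≥0} {f g : ℕ → ℝ} {S : ℝ}
    (hfg : ∀ n, |f n| ≤ g n)
    (hg : HasSum (fun n => poissonPMFReal r n * g n) S) :
    Integrable f (poissonMeasure r) := by
  have hmeas : Measurable f := measurable_from_top
  refine ⟨hmeas.aestronglyMeasurable, ?_⟩
  rw [hasFiniteIntegral_iff_norm]
  calc ∫⁻ a, ENNReal.ofReal ‖f a‖ ∂(poissonMeasure r)
      = ∑' a, ENNReal.ofReal ‖f a‖ * poissonMeasure r {a} := by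
        rw [lintegral_countable']
    _ ≤ ∑' a, ENNReal.ofReal (poissonPMFReal r a * g a) := by
        refine ENNReal.tsum_le_tsum fun a => ?_
        rw [poissonMeasure_singleton, ← ENNReal.ofReal_mul (norm_nonneg _)]
        apply ENNReal.ofReal_le_ofReal
        rw [Real.norm_eq_abs]
        calc |f a| * poissonPMFReal r a ≤ g a * poissonPMFReal r a :=
              mul_le_mul_of_nonneg_right (hfg a) poissonPMFReal_nonneg
          _ = poissonPMFReal r a * g a := mul_comm _ _
    _ = ENNReal.ofReal S := by
        rw [← ENNReal.ofReal_tsum_of_nonneg (fun n => mul_nonneg poissonPMFReal_nonneg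
          ((abs_nonneg (f n)).trans (hfg n))) hg.summable, hg.tsum_eq]
    _ < ⊤ := ENNReal.ofReal_lt_top

lemma integral_poisson_eq {r : ℝ≥0} {f : ℕ → ℝ} {S : ℝ}
    (hi : Integrable f (poissonMeasure r))
    (h : HasSum (fun n => poissonPMFReal r n * f n) S) :
    ∫ a, f a ∂(poissonMeasure r) = S := by
  rw [integral_poissonMeasure' hi, ← h.tsum_eq]
  congr 1

lemma hasSum_bound (r : ℝ≥0) :
    ∃ T : ℝ, HasSum (fun n => poissonPMFReal r n * (1 + (r:ℝ) + n)^4) T := by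
  set R := (r : ℝ)
  have h0 := hasSum_ff r 0
  have h1 := hasSum_ff r 1
  have h2 := hasSum_ff r 2
  have h3 := hasSum_ff r 3
  have h4 := hasSum_ff r 4
  have H := (((h4.add (h3.mul_left (6 + 4*(1+R)))).add
      (h2.mul_left (7 + 12*(1+R) + 6*(1+R)^2))).add
      (h1.mul_left (1 + 4*(1+R) + 6*(1+R)^2 + 4*(1+R)^3))).add
      (h0.mul_left ((1+R)^4))
  have hfun : (fun n => poissonPMFReal r n * (1 + R + (n:ℝ))^4) =
      (fun b => poissonPMFReal r b * ff 4 b + (6 + 4 * (1 + R)) * (poissonPMFReal r b * ff 3 b) +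
            (7 + 12 * (1 + R) + 6 * (1 + R) ^ 2) * (poissonPMFReal r b * ff 2 b) +
          (1 + 4 * (1 + R) + 6 * (1 + R) ^ 2 + 4 * (1 + R) ^ 3) * (poissonPMFReal r b * ff 1 b) +
        (1 + R) ^ 4 * (poissonPMFReal r b * ff 0 b)) := by
    funext n
    obtain ⟨e0, e1, e2, e3, e4⟩ := ff_eval n
    rw [e0, e1, e2, e3, e4]; ring
  exact ⟨_, by rw [hfun]; exact H⟩

lemma integrable_W_pow (r : ℝ≥0) (x : ℝ) {k : ℕ} (hk : k ≤ 4) :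
    Integrable (fun a : ℕ => (((a:ℝ) - r) * x)^k) (poissonMeasure r) := by
  obtain ⟨T, hT⟩ := hasSum_bound r
  set R := (r : ℝ) with hR
  have hRnn : 0 ≤ R := r.coe_nonneg
  have hTk : HasSum (fun n => poissonPMFReal r n * ((1 + R + (n:ℝ))^4 * |x|^k)) (T * |x|^k) := by
    have := hT.mul_right (|x|^k)
    simp only [mul_assoc] at this
    exact this
  refine integrable_of_le_hasSum (g := fun a : ℕ => (1 + R + a)^4 * |x|^k) ?_ hTk
  · intro a
    have h1 : |(a:ℝ) - R| ≤ 1 + R + a := by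
      rw [abs_le]
      constructor <;> [nlinarith [Nat.cast_nonneg (α := ℝ) a]; nlinarith [Nat.cast_nonneg (α := ℝ) a]]
    have hb1 : (1:ℝ) ≤ 1 + R + a := by have := Nat.cast_nonneg (α := ℝ) a; linarith
    calc |(((a:ℝ) - R) * x)^k| = |(a:ℝ) - R|^k * |x|^k := by
          rw [abs_pow, abs_mul, mul_pow]
      _ ≤ (1 + R + a)^k * |x|^k := by
          exact mul_le_mul_of_nonneg_right (pow_le_pow_left₀ (abs_nonneg _) h1 k)
            (pow_nonneg (abs_nonneg _) k)
      _ ≤ (1 + R + a)^4 * |x|^k := by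
          exact mul_le_mul_of_nonneg_right (pow_le_pow_right₀ hb1 hk)
            (pow_nonneg (abs_nonneg _) k)

lemma integral_W (r : ℝ≥0) (x : ℝ) :
    (∫ a : ℕ, (((a:ℝ) - r) * x)^1 ∂(poissonMeasure r)) = 0 ∧
    (∫ a : ℕ, (((a:ℝ) - r) * x)^2 ∂(poissonMeasure r)) = (r:ℝ) * x^2 ∧
    (∫ a : ℕ, (((a:ℝ) - r) * x)^3 ∂(poissonMeasure r)) = (r:ℝ) * x^3 ∧
    (∫ a : ℕ, (((a:ℝ) - r) * x)^4 ∂(poissonMeasure r)) = (3*(r:ℝ)^2 + r) * x^4 := by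
  obtain ⟨c1, c2, c3, c4⟩ := hasSum_centered r
  have key : ∀ (k : ℕ), k ≤ 4 → ∀ (v : ℝ),
      HasSum (fun n => poissonPMFReal r n * ((n:ℝ) - r)^k) v →
      (∫ a : ℕ, (((a:ℝ) - r) * x)^k ∂(poissonMeasure r)) = v * x^k := by
    intro k hk v hv
    refine integral_poisson_eq (integrable_W_pow r x hk) ?_
    have := hv.mul_right (x^k)
    simp only [mul_pow, mul_assoc] at this ⊢
    exact this
  refine ⟨?_, key 2 (by norm_num) _ c2, key 3 (by norm_num) _ c3, key 4 (by norm_num) _ c4⟩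
  have := key 1 (by norm_num) 0 (by simpa using c1)
  simpa using this

lemma step (γ : ℝ) (hγ : 0 < γ) {n : ℕ} (μ : Fin (n+1) → NNReal) (x : Fin (n+1) → ℝ)
    (hμ : ∀ i, γ ≤ (μ i : ℝ))
    (π : Measure (Fin n → ℕ)) [IsProbabilityMeasure π]
    (Z : (Fin n → ℕ) → ℝ) (S : ℝ)
    (hpres : MeasurePreserving (MeasurableEquiv.piFinSuccAbove (fun _ : Fin (n+1) => ℕ) 0)
       (Measure.pi fun i => poissonMeasure (μ i)) ((poissonMeasure (μ 0)).prod π))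
    (hZeq : ∀ y : Fin n → ℕ, Z y = ∑ i, ((y i : ℝ) - (μ i.succ : ℝ)) * x i.succ)
    (hSnn : 0 ≤ S)
    (hZint : ∀ k : ℕ, k ≤ 4 → Integrable (fun y => Z y ^ k) π)
    (vZ1 : (∫ y, Z y ∂π) = 0)
    (vZ2 : (∫ y, Z y ^ 2 ∂π) = S)
    (vZ4 : (∫ y, Z y ^ 4 ∂π) ≤ (3 + 1/γ) * S ^ 2) :
    (∀ k : ℕ, k ≤ 4 → Integrable
        (fun y : Fin (n+1) → ℕ => (∑ i, ((y i : ℝ) - (μ i : ℝ)) * x i) ^ k)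
        (Measure.pi fun i => poissonMeasure (μ i))) ∧
    (∫ y : Fin (n+1) → ℕ, (∑ i, ((y i : ℝ) - (μ i : ℝ)) * x i)
        ∂(Measure.pi fun i => poissonMeasure (μ i))) = 0 ∧
    (∫ y : Fin (n+1) → ℕ, (∑ i, ((y i : ℝ) - (μ i : ℝ)) * x i) ^ 2
        ∂(Measure.pi fun i => poissonMeasure (μ i))) = (μ 0 : ℝ) * x 0 ^ 2 + S ∧
    (∫ y : Fin (n+1) → ℕ, (∑ i, ((y i : ℝ) - (μ i : ℝ)) * x i) ^ 4
        ∂(Measure.pi fun i => poissonMeasure (μ i)))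
      ≤ (3 + 1 / γ) * ((μ 0 : ℝ) * x 0 ^ 2 + S) ^ 2 := by
  set r : NNReal := μ 0 with hr
  set c : ℝ := x 0 with hc
  have W : True := trivial
  set ν := poissonMeasure r with hν
  set e := MeasurableEquiv.piFinSuccAbove (fun _ : Fin (n+1) => ℕ) 0 with he_def
  have he : ∀ y : Fin (n+1) → ℕ, e y = (y 0, fun j => y j.succ) := by
    intro y
    simp [he_def, MeasurableEquiv.piFinSuccAbove, Fin.removeNth, Fin.succAbove_zero]
    try rfl
  have hsum : ∀ y : Fin (n+1) → ℕ,
      (∑ i, ((y i : ℝ) - (μ i : ℝ)) * x i) = ((((e y).1 : ℝ) - r) * c) + Z (e y).2 := by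
    intro y
    rw [he y, Fin.sum_univ_succ, hZeq]
  have hWint : ∀ k : ℕ, k ≤ 4 →
      Integrable (fun a : ℕ => (((a : ℝ) - r) * c) ^ k) ν := by
    intro k hk
    exact integrable_W_pow r c hk
  obtain ⟨vW1, vW2, vW3, vW4⟩ := integral_W r c
  have vW1' : (∫ a : ℕ, (((a : ℝ) - r) * c) ∂poissonMeasure r) = 0 := by
    simpa using vW1
  have hGint : ∀ k : ℕ, k ≤ 4 →
      Integrable (fun p : ℕ × (Fin n → ℕ) => ((((p.1 : ℕ) : ℝ) - r) * c + Z p.2) ^ k)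
        (ν.prod π) := by
    intro k hk
    have hexp : (fun p : ℕ × (Fin n → ℕ) => ((((p.1 : ℕ) : ℝ) - r) * c + Z p.2) ^ k) =
        fun p => ∑ j ∈ Finset.range (k+1),
          ((((p.1 : ℕ) : ℝ) - r) * c) ^ j * Z p.2 ^ (k - j) * (k.choose j : ℝ) := by
      funext p; rw [add_pow]
    rw [hexp]
    apply integrable_finset_sum
    intro j hj
    have hj4 : j ≤ 4 := le_trans (Nat.lt_succ_iff.1 (Finset.mem_range.1 hj)) hk
    have hkj4 : k - j ≤ 4 := le_trans (Nat.sub_le _ _) hk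
    exact ((hWint j hj4).mul_prod (hZint (k - j) hkj4)).mul_const _
  have hGval : ∀ k : ℕ, k ≤ 4 →
      (∫ p : ℕ × (Fin n → ℕ), ((((p.1 : ℕ) : ℝ) - r) * c + Z p.2) ^ k ∂(ν.prod π)) =
        ∑ j ∈ Finset.range (k+1),
          (∫ a : ℕ, (((a : ℝ) - r) * c) ^ j ∂ν) * (∫ y, Z y ^ (k - j) ∂π)
            * (k.choose j : ℝ) := by
    intro k hk
    have hexp : (fun p : ℕ × (Fin n → ℕ) => ((((p.1 : ℕ) : ℝ) - r) * c + Z p.2) ^ k) =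
        fun p => ∑ j ∈ Finset.range (k+1),
          ((((p.1 : ℕ) : ℝ) - r) * c) ^ j * Z p.2 ^ (k - j) * (k.choose j : ℝ) := by
      funext p; rw [add_pow]
    rw [hexp, integral_finset_sum]
    · refine Finset.sum_congr rfl fun j hj => ?_
      rw [integral_mul_const,
        integral_prod_mul (fun a : ℕ => (((a : ℝ) - r) * c) ^ j) (fun y => Z y ^ (k - j))]
    · intro j hj
      have hj4 : j ≤ 4 := le_trans (Nat.lt_succ_iff.1 (Finset.mem_range.1 hj)) hk
      have hkj4 : k - j ≤ 4 := le_trans (Nat.sub_le _ _) hk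
      exact ((hWint j hj4).mul_prod (hZint (k - j) hkj4)).mul_const _
  have hIcomp : ∀ k : ℕ,
      (∫ y : Fin (n+1) → ℕ, (∑ i, ((y i : ℝ) - (μ i : ℝ)) * x i) ^ k
          ∂(Measure.pi fun i => poissonMeasure (μ i))) =
        ∫ p : ℕ × (Fin n → ℕ), ((((p.1 : ℕ) : ℝ) - r) * c + Z p.2) ^ k ∂(ν.prod π) := by
    intro k
    have hfun : (fun y : Fin (n+1) → ℕ => (∑ i, ((y i : ℝ) - (μ i : ℝ)) * x i) ^ k) =
        fun y => ((((e y).1 : ℝ) - r) * c + Z (e y).2) ^ k := by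
      funext y; rw [hsum y]
    rw [hfun]
    exact hpres.integral_comp e.measurableEmbedding
      (fun p : ℕ × (Fin n → ℕ) => ((((p.1 : ℕ) : ℝ) - r) * c + Z p.2) ^ k)
  refine ⟨fun k hk => ?_, ?_, ?_, ?_⟩
  · have hfun : (fun y : Fin (n+1) → ℕ => (∑ i, ((y i : ℝ) - (μ i : ℝ)) * x i) ^ k) =
        (fun p : ℕ × (Fin n → ℕ) => ((((p.1 : ℕ) : ℝ) - r) * c + Z p.2) ^ k) ∘ e := by
      funext y
      simp only [Function.comp_apply]
      rw [hsum y]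
    rw [hfun]
    exact e.measurableEmbedding.integrable_map_iff.mp
      (by rw [hpres.map_eq]; exact hGint k hk)
  · have h1 := hIcomp 1
    simp only [pow_one] at h1
    rw [h1]
    have h2 := hGval 1 (by norm_num)
    simp only [pow_one] at h2
    rw [h2, Finset.sum_range_succ, Finset.sum_range_succ, Finset.sum_range_zero]
    norm_num [hν, vZ1, vW1', Nat.choose]
  · rw [hIcomp 2, hGval 2 (by norm_num), Finset.sum_range_succ, Finset.sum_range_succ,
      Finset.sum_range_succ, Finset.sum_range_zero]
    norm_num [hν, vW1', vW2, vZ1, vZ2, Nat.choose]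
    ring
  · rw [hIcomp 4, hGval 4 (by norm_num), Finset.sum_range_succ, Finset.sum_range_succ,
      Finset.sum_range_succ, Finset.sum_range_succ, Finset.sum_range_succ,
      Finset.sum_range_zero]
    norm_num [hν, vW1', vW2, vW3, vW4, vZ1, vZ2, Nat.choose]
    have hrγ : γ ≤ (r : ℝ) := hμ 0
    have hrnn : (0:ℝ) ≤ (r : ℝ) := le_trans hγ.le hrγ
    have hc2 : (0:ℝ) ≤ c ^ 2 := sq_nonneg c
    have hinv : (0:ℝ) ≤ γ⁻¹ := inv_nonneg.2 hγ.le
    have hkey : (r : ℝ) ≤ γ⁻¹ * (r:ℝ)^2 := by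
      have h1 : γ * (r:ℝ) ≤ (r:ℝ) * (r:ℝ) := mul_le_mul_of_nonneg_right hrγ hrnn
      have h2 : γ⁻¹ * (γ * (r:ℝ)) ≤ γ⁻¹ * ((r:ℝ) * (r:ℝ)) :=
        mul_le_mul_of_nonneg_left h1 hinv
      calc (r:ℝ) = γ⁻¹ * (γ * (r:ℝ)) := by field_simp
        _ ≤ γ⁻¹ * ((r:ℝ) * (r:ℝ)) := h2
        _ = γ⁻¹ * (r:ℝ)^2 := by ring
    have hkey4 : (r : ℝ) * c^4 ≤ γ⁻¹ * (r:ℝ)^2 * c^4 :=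
      mul_le_mul_of_nonneg_right hkey (by positivity)
    have hcross : (0:ℝ) ≤ γ⁻¹ * (r:ℝ) * c^2 * S :=
      mul_nonneg (mul_nonneg (mul_nonneg hinv hrnn) hc2) hSnn
    have vZ4' : (∫ y, Z y ^ 4 ∂π) ≤ (3 + γ⁻¹) * S ^ 2 := by
      rw [← one_div]; exact vZ4
    nlinarith [vZ4', hkey4, hcross, hSnn, hc2]

lemma main_aux (γ : ℝ) (hγ : 0 < γ) :
    ∀ (n : ℕ) (μ : Fin n → NNReal) (x : Fin n → ℝ), (∀ i, γ ≤ (μ i : ℝ)) →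
    (∀ k : ℕ, k ≤ 4 → Integrable
        (fun y : Fin n → ℕ => (∑ i, ((y i : ℝ) - (μ i : ℝ)) * x i) ^ k)
        (Measure.pi fun i => poissonMeasure (μ i))) ∧
    (∫ y : Fin n → ℕ, (∑ i, ((y i : ℝ) - (μ i : ℝ)) * x i)
        ∂(Measure.pi fun i => poissonMeasure (μ i))) = 0 ∧
    (∫ y : Fin n → ℕ, (∑ i, ((y i : ℝ) - (μ i : ℝ)) * x i) ^ 2
        ∂(Measure.pi fun i => poissonMeasure (μ i))) = ∑ i, (μ i : ℝ) * x i ^ 2 ∧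
    (∫ y : Fin n → ℕ, (∑ i, ((y i : ℝ) - (μ i : ℝ)) * x i) ^ 4
        ∂(Measure.pi fun i => poissonMeasure (μ i)))
      ≤ (3 + 1 / γ) * (∑ i, (μ i : ℝ) * x i ^ 2) ^ 2 := by
  intro n
  induction n with
  | zero =>
    intro μ x hμ
    refine ⟨fun k hk => ?_, ?_, ?_, ?_⟩
    · simpa using integrable_const ((0:ℝ) ^ k)
    · simp
    · simp
    · simp
  | succ n ih =>
    intro μ x hμ
    obtain ⟨ihInt, ihZ1, ihZ2, ihZ4⟩ :=
      ih (fun i => μ i.succ) (fun i => x i.succ) (fun i => hμ i.succ)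
    have hSnn : (0:ℝ) ≤ ∑ i : Fin n, (μ i.succ : ℝ) * x i.succ ^ 2 :=
      Finset.sum_nonneg fun i _ => mul_nonneg (μ i.succ).coe_nonneg (sq_nonneg _)
    have hpres : MeasurePreserving (MeasurableEquiv.piFinSuccAbove (fun _ : Fin (n+1) => ℕ) 0)
        (Measure.pi fun i => poissonMeasure (μ i))
        ((poissonMeasure (μ 0)).prod (Measure.pi fun i : Fin n => poissonMeasure (μ i.succ))) := by
      have h := measurePreserving_piFinSuccAbove (fun i => poissonMeasure (μ i)) 0
      simpa [Fin.succAbove_zero] using h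
    obtain ⟨H1, H2, H3, H4⟩ := step γ hγ μ x hμ
      (Measure.pi fun i : Fin n => poissonMeasure (μ i.succ))
      (fun y => ∑ i, ((y i : ℝ) - (μ i.succ : ℝ)) * x i.succ)
      (∑ i : Fin n, (μ i.succ : ℝ) * x i.succ ^ 2)
      hpres (fun y => rfl) hSnn
      (fun k hk => ihInt k hk) ihZ1 ihZ2 ihZ4
    refine ⟨H1, H2, ?_, ?_⟩
    · rw [Fin.sum_univ_succ]
      exact H3
    · rw [Fin.sum_univ_succ]
      exact H4

end PoissonHC



/-- Hyper-contractivity of `Z = Σᵢ (yᵢ − μᵢ) xᵢ` for independent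
`yᵢ ~ Poisson(μᵢ)` with `μᵢ ≥ γ > 0`:
`E[Z⁴] ≤ (3 + 1/γ) (E[Z²])²`. -/
theorem poisson_linear_combination_hypercontractive
    {n : ℕ} (μ : Fin n → NNReal) (x : Fin n → ℝ) (γ : ℝ)
    (hγ : 0 < γ) (hμ : ∀ i, γ ≤ (μ i : ℝ)) :
    (∫ y : Fin n → ℕ, (∑ i, ((y i : ℝ) - (μ i : ℝ)) * x i) ^ 4
        ∂(Measure.pi fun i => poissonMeasure (μ i)))
      ≤ (3 + 1 / γ) *
        (∫ y : Fin n → ℕ, (∑ i, ((y i : ℝ) - (μ i : ℝ)) * x i) ^ 2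
          ∂(Measure.pi fun i => poissonMeasure (μ i))) ^ 2 := by
  obtain ⟨-, -, h2, h4⟩ := PoissonHC.main_aux γ hγ n μ x hμ
  rw [h2]
  exact h4
end
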